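/- Fix $b, c \in (1,\infty)$ and $d \in (1,c)$. Let $(\Pi_n)_{n\geq 1}$ be a non-decreasing sequence of real numbers $\geq 1$ such that $\Pi_n \geq b^{c^n}$ for infinitely many $n$. Then $\Pi_{n+1} > \max\{\Pi_n^d, b^{d^{n+1}}\}$ for infinitely many $n$. -/

import Mathlib

/-- Fix `b, c ∈ (1,∞)` and `d ∈ (1,c)`. If `(P n)` is a non-decreasing sequence
of reals `≥ 1` with `P n ≥ b^(c^n)` infinitely often, then
`P (n+1) > max (P n ^ d) (b ^ (d^(n+1)))` infinitely often. -/
theorem stmt9 (b c d : ℝ) (hb : 1 < b) (hc : 1 < c) (hd1 : 1 < d) (hdc : d < c)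
    (P : ℕ → ℝ) (hmono : Monotone P) (hone : ∀ n, 1 ≤ P n)
    (hinf : ∃ᶠ n in Filter.atTop, b ^ (c ^ n) ≤ P n) :
    ∃ᶠ n in Filter.atTop, max (P n ^ d) (b ^ (d ^ (n + 1))) < P (n + 1) := by
  by_contra hcon
  rw [Filter.not_frequently] at hcon
  obtain ⟨N, hN⟩ := Filter.eventually_atTop.mp hcon
  have hb0 : (0:ℝ) < b := lt_trans one_pos hb
  have hd0 : (0:ℝ) < d := lt_trans one_pos hd1
  have hc0 : (0:ℝ) < c := lt_trans one_pos hc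
  have hPpos : ∀ n, (0:ℝ) < P n := fun n => lt_of_lt_of_le one_pos (hone n)
  have key : ∀ k, P (N + k) ≤ max (P N ^ ((d : ℝ) ^ k)) (b ^ ((d : ℝ) ^ (N + k))) := by
    intro k
    induction k with
    | zero =>
      simp only [Nat.add_zero, pow_zero, Real.rpow_one]
      exact le_max_left _ _
    | succ k ih =>
      have h1' : P (N+k+1) ≤ max (P (N+k) ^ d) (b ^ (d ^ (N+k+1))) :=
        not_lt.mp (hN (N+k) (Nat.le_add_right N k))
      have h2 : P (N+k) ^ d ≤ (max (P N ^ ((d : ℝ) ^ k)) (b ^ ((d : ℝ) ^ (N + k)))) ^ d :=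
        Real.rpow_le_rpow (hPpos _).le ih hd0.le
      have h3 : (max (P N ^ ((d : ℝ) ^ k)) (b ^ ((d : ℝ) ^ (N + k)))) ^ d
          ≤ max ((P N ^ ((d : ℝ) ^ k)) ^ d) ((b ^ ((d : ℝ) ^ (N + k))) ^ d) := by
        rcases max_cases (P N ^ ((d : ℝ) ^ k)) (b ^ ((d : ℝ) ^ (N + k))) with ⟨h, _⟩ | ⟨h, _⟩ <;>
          rw [h]
        · exact le_max_left _ _
        · exact le_max_right _ _
      have e1 : (P N ^ ((d : ℝ) ^ k)) ^ d = P N ^ ((d : ℝ) ^ (k+1)) := by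
        rw [← Real.rpow_mul (hPpos N).le, ← pow_succ]
      have e2 : (b ^ ((d : ℝ) ^ (N + k))) ^ d = b ^ ((d : ℝ) ^ (N + k + 1)) := by
        rw [← Real.rpow_mul hb0.le, ← pow_succ]
      rw [e1, e2] at h3
      have : P (N + (k+1)) ≤ max (max (P N ^ ((d:ℝ) ^ (k+1))) (b ^ ((d:ℝ) ^ (N+k+1))))
          (b ^ (d ^ (N+k+1))) := by
        calc P (N + (k+1)) = P (N + k + 1) := by ring_nf
        _ ≤ max (P (N+k) ^ d) (b ^ (d ^ (N+k+1))) := h1'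
        _ ≤ _ := max_le_max (h2.trans h3) le_rfl
      simpa [max_assoc, Nat.add_assoc] using this
  -- Now derive the contradiction
  set L : ℝ := Real.log (P N) with hL
  have hL0 : 0 ≤ L := Real.log_nonneg (hone N)
  have hlb : 0 < Real.log b := Real.log_pos hb
  have hdc1 : d / c < 1 := (div_lt_one hc0).mpr hdc
  have htend : Filter.Tendsto (fun n : ℕ => (d/c)^n * (L / d^N)) Filter.atTop (nhds 0) := by
    have h0 : (0:ℝ) ≤ d / c := by positivity
    have := tendsto_pow_atTop_nhds_zero_of_lt_one h0 hdc1
    simpa using this.mul_const (L / d^N)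
  have hev : ∀ᶠ n in Filter.atTop, (d/c)^n * (L / d^N) < Real.log b :=
    htend.eventually_lt_const hlb
  obtain ⟨n, hPn, hsmall, hn⟩ := (hinf.and_eventually
    (hev.and (Filter.eventually_ge_atTop (N+1)))).exists
  have hnN : N ≤ n := le_trans (Nat.le_succ N) hn
  have hn1 : 1 ≤ n := le_trans (Nat.le_add_left 1 N) hn
  set k := n - N with hk
  have hnk : N + k = n := Nat.add_sub_cancel' hnN
  have hbound : P n ≤ max (P N ^ ((d : ℝ) ^ k)) (b ^ ((d : ℝ) ^ n)) := by
    have := key k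
    rwa [hnk] at this
  have hpow : d ^ k * d ^ N = d ^ n := by
    rw [← pow_add, Nat.sub_add_cancel hnN]
  -- both parts of the max are < b ^ c^n
  have hB : b ^ ((d : ℝ) ^ n) < b ^ ((c : ℝ) ^ n) := by
    exact (Real.rpow_lt_rpow_left_iff hb).mpr (pow_lt_pow_left₀ hdc hd0.le (by omega))
  have hA : P N ^ ((d : ℝ) ^ k) < b ^ ((c : ℝ) ^ n) := by
    rw [Real.rpow_def_of_pos (hPpos N), Real.rpow_def_of_pos hb0, Real.exp_lt_exp]
    have h1 : (d/c)^n * (L / d^N) < Real.log b := hsmall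
    have hdN : (0:ℝ) < d ^ N := pow_pos hd0 N
    have hcn : (0:ℝ) < c ^ n := pow_pos hc0 n
    have hdn : (0:ℝ) < d ^ n := pow_pos hd0 n
    rw [div_pow, div_mul_eq_mul_div, div_lt_iff₀ hcn] at h1
    have h2 := mul_lt_mul_of_pos_right h1 hdN
    have e : d ^ n * (L / d ^ N) * d ^ N = L * d ^ k * d ^ N := by
      rw [mul_assoc L, hpow]; field_simp
    rw [e] at h2
    exact lt_of_mul_lt_mul_right h2 hdN.le
  have : b ^ ((c:ℝ) ^ n) < b ^ ((c:ℝ) ^ n) :=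
    lt_of_le_of_lt (hPn.trans hbound) (max_lt hA hB)
  exact lt_irrefl _ this
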